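/- Let S ∈ I₁ ∩ I₂ and let Π = (B₁, A₁, B₂, A₂, …, A_ℓ, B_{ℓ+1}) be an augmenting set in the exchange graph G(S), with shortest s–t distance 2(ℓ+1). Then S ⊕ Π := S + B₁ − A₁ + B₂ − ⋯ + B_ℓ − A_ℓ + B_{ℓ+1} is a common independent set of size |S| + w, where w is the width of Π. -/

import Mathlib

open Classical

noncomputable section

structure FinMatroid (α : Type*) where
  Indep : Finset α → Prop
  empty_indep : Indep ∅
  subset_indep : ∀ ⦃A B : Finset α⦄, Indep A → B ⊆ A → Indep B
  exchange : ∀ ⦃A B : Finset α⦄, Indep A → Indep B → A.card < B.card →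
    ∃ b ∈ B \ A, Indep (insert b A)

variable {α : Type*} [DecidableEq α]

/-- The rank of a set `T`: the maximum cardinality of an independent subset of `T`. -/
def FinMatroid.rank (M : FinMatroid α) (T : Finset α) : ℕ :=
  (T.powerset.filter fun A => M.Indep A).sup Finset.card

/-- Vertices of the exchange graph: a source `src`, a sink `snk`, and the ground elements. -/
inductive EGV (α : Type*) where
  | src : EGV α
  | snk : EGV α
  | el : α → EGV α

/-- Arcs of the exchange graph `G(S)` for `S ∈ I₁ ∩ I₂`. -/
def egAdj (M₁ M₂ : FinMatroid α) (S : Finset α) : EGV α → EGV α → Prop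
  | EGV.src, EGV.el b => b ∉ S ∧ M₁.Indep (insert b S)
  | EGV.el b, EGV.snk => b ∉ S ∧ M₂.Indep (insert b S)
  | EGV.el x, EGV.el y =>
      (x ∈ S ∧ y ∉ S ∧ M₁.Indep (insert y (S.erase x))) ∨
      (x ∉ S ∧ y ∈ S ∧ M₂.Indep (insert x (S.erase y)))
  | _, _ => False

/-- Directed shortest-path distance in the exchange graph (number of arcs), `⊤` if unreachable. -/
def egDist (M₁ M₂ : FinMatroid α) (S : Finset α) (u v : EGV α) : ℕ∞ :=
  sInf {n : ℕ∞ | ∃ l : List (EGV α),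
    List.Chain' (egAdj M₁ M₂ S) (u :: (l ++ [v])) ∧ n = (l.length : ℕ∞) + 1}


namespace FinMatroid
variable (M : FinMatroid α)

lemma exchange' {A B : Finset α} (hA : M.Indep A) (hB : M.Indep B)
    (h : A.card < B.card) : ∃ b ∈ B \ A, M.Indep (insert b A) := by
  obtain ⟨b, hb, hbi⟩ := M.exchange hA hB h
  refine ⟨b, ?_, by convert hbi using 2; exact congrArg _ (Subsingleton.elim _ _)⟩
  convert hb using 2
  exact congrArg _ (Subsingleton.elim _ _)

lemma le_rank {J T : Finset α} (hJ : M.Indep J) (hJT : J ⊆ T) : J.card ≤ M.rank T :=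
  Finset.le_sup (by simp [Finset.mem_filter, Finset.mem_powerset, hJT, hJ])

lemma rank_le_card (T : Finset α) : M.rank T ≤ T.card :=
  Finset.sup_le fun A hA => by
    simp only [Finset.mem_filter, Finset.mem_powerset] at hA
    exact Finset.card_le_card hA.1

lemma rank_mono {T U : Finset α} (h : T ⊆ U) : M.rank T ≤ M.rank U :=
  Finset.sup_le fun A hA => by
    simp only [Finset.mem_filter, Finset.mem_powerset] at hA
    exact M.le_rank hA.2 (hA.1.trans h)

lemma exists_basis (T : Finset α) : ∃ J, J ⊆ T ∧ M.Indep J ∧ J.card = M.rank T := by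
  have hne : (T.powerset.filter fun A => M.Indep A).Nonempty :=
    ⟨∅, by simp [M.empty_indep]⟩
  obtain ⟨J, hJ, hJ2⟩ := Finset.exists_mem_eq_sup _ hne Finset.card
  simp only [Finset.mem_filter, Finset.mem_powerset] at hJ
  exact ⟨J, hJ.1, hJ.2, hJ2.symm⟩

lemma indep_of_rank_eq_card {T : Finset α} (h : M.rank T = T.card) : M.Indep T := by
  obtain ⟨J, hJT, hJ, hcard⟩ := M.exists_basis T
  have : J = T := Finset.eq_of_subset_of_card_le hJT (by omega)
  exact this ▸ hJ

lemma rank_eq_of_maximal {J T : Finset α} (hJT : J ⊆ T) (hJ : M.Indep J)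
    (hmax : ∀ e ∈ T, e ∉ J → ¬ M.Indep (insert e J)) : M.rank T = J.card := by
  refine le_antisymm (Finset.sup_le fun K hK => ?_) (M.le_rank hJ hJT)
  simp only [Finset.mem_filter, Finset.mem_powerset] at hK
  by_contra hlt
  obtain ⟨e, he, hei⟩ := M.exchange' hJ hK.2 (by omega)
  simp only [Finset.mem_sdiff] at he
  exact hmax e (hK.1 he.1) he.2 hei

lemma exists_maximal {J T : Finset α} (hJ : M.Indep J) (hJT : J ⊆ T) :
    ∃ J', J ⊆ J' ∧ J' ⊆ T ∧ M.Indep J' ∧ ∀ e ∈ T, e ∉ J' → ¬ M.Indep (insert e J') := by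
  have hne : (T.powerset.filter fun K => J ⊆ K ∧ M.Indep K).Nonempty :=
    ⟨J, by simp [hJ, hJT]⟩
  obtain ⟨K, hK, hKmax⟩ := Finset.exists_max_image _ Finset.card hne
  simp only [Finset.mem_filter, Finset.mem_powerset] at hK
  refine ⟨K, hK.2.1, hK.1, hK.2.2, fun e heT heK hind => ?_⟩
  have := hKmax (insert e K) (by
    simp only [Finset.mem_filter, Finset.mem_powerset]
    exact ⟨Finset.insert_subset heT hK.1, hK.2.1.trans (Finset.subset_insert _ _), hind⟩)
  rw [Finset.card_insert_of_notMem heK] at this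
  omega

lemma rank_insert_of {Y X : Finset α} (a : α) (hYX : Y ⊆ X)
    (h : M.rank (insert a Y) = M.rank Y) : M.rank (insert a X) = M.rank X := by
  by_cases haX : a ∈ X
  · rw [Finset.insert_eq_self.2 haX]
  have haY : a ∉ Y := fun h' => haX (hYX h')
  obtain ⟨JY, hJYsub, hJY, hJYcard⟩ := M.exists_basis Y
  obtain ⟨J', hsub, hJ'T, hJ', hmax⟩ := M.exists_maximal hJY (hJYsub.trans hYX)
  have hrX : M.rank X = J'.card := M.rank_eq_of_maximal hJ'T hJ' hmax
  refine le_antisymm ?_ (M.rank_mono (Finset.subset_insert _ _))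
  obtain ⟨K, hKsub, hK, hKcard⟩ := M.exists_basis (insert a X)
  rw [← hKcard]
  by_contra hlt
  push_neg at hlt
  obtain ⟨e, he, hei⟩ := M.exchange' hJ' hK (by omega)
  simp only [Finset.mem_sdiff] at he
  have heX : e ∈ insert a X := hKsub he.1
  rcases Finset.mem_insert.1 heX with rfl | heX'
  · -- e = a, so insert a J' indep, so insert a JY indep
    have : M.Indep (insert e JY) := M.subset_indep hei (Finset.insert_subset_insert _ hsub)
    have h1 : JY.card + 1 ≤ M.rank (insert e Y) := by
      have := M.le_rank this (Finset.insert_subset_insert _ hJYsub)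
      rwa [Finset.card_insert_of_notMem (fun hc => haY (hJYsub hc))] at this
    omega
  · exact hmax e heX' he.2 hei

lemma rank_union_of_forall {Y X W : Finset α} (hYX : Y ⊆ X)
    (h : ∀ a ∈ W, M.rank (insert a Y) = M.rank Y) : M.rank (X ∪ W) = M.rank X := by
  induction W using Finset.induction with
  | empty => simp
  | @insert a W haW ih =>
    have h1 : M.rank (X ∪ W) = M.rank X := ih (fun b hb => h b (Finset.mem_insert_of_mem hb))
    have h2 : M.rank (insert a (X ∪ W)) = M.rank (X ∪ W) :=
      M.rank_insert_of a (hYX.trans Finset.subset_union_left) (h a (Finset.mem_insert_self _ _))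
    rw [Finset.union_insert] at *
    rw [h2, h1]

lemma swap_lemma {C A' R B' : Finset α}
    (hAC : Disjoint A' C) (hBC : Disjoint B' C) (hBR : Disjoint B' R)
    (hCR : Disjoint C R) (hAR : Disjoint A' R)
    (hcard : A'.card = B'.card)
    (h1 : M.Indep (C ∪ A' ∪ R)) (h2 : M.Indep (C ∪ B'))
    (h3 : ∀ b ∈ B', ¬ M.Indep (insert b (C ∪ A'))) :
    M.Indep (C ∪ R ∪ B') := by
  have hCA : M.Indep (C ∪ A') := M.subset_indep h1 (by
    intro x hx; rcases Finset.mem_union.1 hx with h | h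
    · exact Finset.mem_union_left _ (Finset.mem_union_left _ h)
    · exact Finset.mem_union_left _ (Finset.mem_union_right _ h))
  have step1 : M.rank (C ∪ A' ∪ B') = (C ∪ A').card := by
    refine M.rank_eq_of_maximal Finset.subset_union_left hCA fun e he heCA => ?_
    rcases Finset.mem_union.1 he with h | h
    · exact absurd h heCA
    · exact h3 e h
  have cCA : (C ∪ A').card = C.card + B'.card := by
    rw [Finset.card_union_of_disjoint hAC.symm]; omega
  have cCB : (C ∪ B').card = C.card + B'.card := by
    rw [Finset.card_union_of_disjoint hBC.symm]
  have r2 : M.rank (C ∪ B') = C.card + B'.card := by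
    have := M.le_rank h2 (le_refl _)
    have := M.rank_le_card (C ∪ B')
    omega
  have hspan : ∀ a ∈ A', M.rank (insert a (C ∪ B')) = M.rank (C ∪ B') := by
    intro a ha
    have h1' : M.rank (insert a (C ∪ B')) ≤ M.rank (C ∪ A' ∪ B') := by
      apply M.rank_mono
      intro x hx
      rcases Finset.mem_insert.1 hx with rfl | hx'
      · exact Finset.mem_union_left _ (Finset.mem_union_right _ ha)
      · rcases Finset.mem_union.1 hx' with h | h
        · exact Finset.mem_union_left _ (Finset.mem_union_left _ h)
        · exact Finset.mem_union_right _ h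
    have h2' : M.rank (C ∪ B') ≤ M.rank (insert a (C ∪ B')) :=
      M.rank_mono (Finset.subset_insert _ _)
    rw [step1, cCA] at h1'
    omega
  have key : M.rank ((C ∪ R ∪ B') ∪ A') = M.rank (C ∪ R ∪ B') := by
    apply M.rank_union_of_forall (Y := C ∪ B') _ hspan
    intro x hx
    rcases Finset.mem_union.1 hx with h | h
    · exact Finset.mem_union_left _ (Finset.mem_union_left _ h)
    · exact Finset.mem_union_right _ h
  have hbig : (C ∪ A' ∪ R).card ≤ M.rank ((C ∪ R ∪ B') ∪ A') := by
    apply M.le_rank h1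
    intro x hx
    rcases Finset.mem_union.1 hx with h | h
    · rcases Finset.mem_union.1 h with h' | h'
      · exact Finset.mem_union_left _ (Finset.mem_union_left _ (Finset.mem_union_left _ h'))
      · exact Finset.mem_union_right _ h'
    · exact Finset.mem_union_left _ (Finset.mem_union_left _ (Finset.mem_union_right _ h))
  have c1 : (C ∪ A' ∪ R).card = C.card + A'.card + R.card := by
    rw [Finset.card_union_of_disjoint, Finset.card_union_of_disjoint hAC.symm]
    exact Finset.disjoint_union_left.2 ⟨hCR, hAR⟩
  have c2 : (C ∪ R ∪ B').card = C.card + R.card + B'.card := by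
    rw [Finset.card_union_of_disjoint, Finset.card_union_of_disjoint hCR]
    exact Finset.disjoint_union_left.2 ⟨hBC.symm, hBR.symm⟩
  apply M.indep_of_rank_eq_card
  have := M.rank_le_card (C ∪ R ∪ B')
  omega


end FinMatroid

section Graph
variable (M₁ M₂ : FinMatroid α) (S : Finset α)

lemma adj_to_src (u : EGV α) : ¬ egAdj M₁ M₂ S u EGV.src := by
  cases u <;> simp [egAdj]

lemma adj_from_snk (v : EGV α) : ¬ egAdj M₁ M₂ S EGV.snk v := by
  cases v <;> simp [egAdj]

lemma egDist_le {u v : EGV α} {l : List (EGV α)}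
    (h : List.Chain' (egAdj M₁ M₂ S) (u :: (l ++ [v]))) :
    egDist M₁ M₂ S u v ≤ (l.length : ℕ∞) + 1 :=
  sInf_le ⟨l, h, rfl⟩

lemma exists_path {u v : EGV α} {n : ℕ}
    (h : egDist M₁ M₂ S u v = (n : ℕ∞)) :
    ∃ l : List (EGV α), List.Chain' (egAdj M₁ M₂ S) (u :: (l ++ [v])) ∧ l.length + 1 = n := by
  have hmem : (n : ℕ∞) ∈ {m : ℕ∞ | ∃ l : List (EGV α),
      List.Chain' (egAdj M₁ M₂ S) (u :: (l ++ [v])) ∧ m = (l.length : ℕ∞) + 1} := by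
    by_contra hmem
    have hge : (n : ℕ∞) + 1 ≤ egDist M₁ M₂ S u v := by
      refine le_sInf fun m hm => ?_
      have h1 : (n : ℕ∞) ≤ m := h ▸ sInf_le hm
      have h2 : (n : ℕ∞) ≠ m := fun e => hmem (e ▸ hm)
      exact Order.add_one_le_of_lt (lt_of_le_of_ne h1 h2)
    rw [h] at hge
    exact lt_irrefl _ ((ENat.add_one_le_iff (by simp)).1 hge)
  obtain ⟨l, hc, he⟩ := hmem
  refine ⟨l, hc, ?_⟩
  have he' : ((l.length + 1 : ℕ) : ℕ∞) = (n : ℕ∞) := by push_cast; exact he.symm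
  exact_mod_cast he'

lemma egDist_le_succ {u v : EGV α} {n : ℕ}
    (h : egDist M₁ M₂ S EGV.src u = (n : ℕ∞)) (hadj : egAdj M₁ M₂ S u v) :
    egDist M₁ M₂ S EGV.src v ≤ ((n + 1 : ℕ) : ℕ∞) := by
  obtain ⟨l, hc, hlen⟩ := exists_path M₁ M₂ S h
  have hc' : List.Chain' (egAdj M₁ M₂ S) (EGV.src :: ((l ++ [u]) ++ [v])) := by
    have : EGV.src :: ((l ++ [u]) ++ [v]) = (EGV.src :: (l ++ [u])) ++ [v] := by simp
    rw [this]
    refine List.IsChain.append hc (List.isChain_singleton _) ?_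
    intro x hx y hy
    have hx' : x = u := by
      have : (EGV.src :: (l ++ [u])).getLast? = some u := by
        rw [show EGV.src :: (l ++ [u]) = (EGV.src :: l) ++ [u] by simp, List.getLast?_concat]
      rw [this] at hx; exact (Option.mem_some_iff.1 hx).symm
    have hy' : y = v := by simp at hy; exact hy.symm
    rw [hx', hy']; exact hadj
  have := egDist_le M₁ M₂ S hc'
  simp only [List.length_append, List.length_singleton] at this
  calc egDist M₁ M₂ S EGV.src v ≤ ((l.length + 1 : ℕ) : ℕ∞) + 1 := by exact_mod_cast this
    _ = ((n + 1 : ℕ) : ℕ∞) := by push_cast; rw [← hlen]; push_cast; ring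

lemma chain_parity : ∀ (l : List (EGV α)) (b : α),
    List.Chain' (egAdj M₁ M₂ S) (EGV.src :: (l ++ [EGV.el b])) → (b ∉ S ↔ Even l.length) := by
  intro l
  induction l using List.reverseRecOn with
  | nil =>
    intro b h
    simp only [List.nil_append] at h
    change List.IsChain _ _ at h
    rw [List.isChain_cons_cons] at h
    simp only [List.length_nil]
    exact ⟨fun _ => Even.zero, fun _ => h.1.1⟩
  | append_singleton l c ih =>
    intro b h
    have hsplit : EGV.src :: ((l ++ [c]) ++ [EGV.el b]) = (EGV.src :: (l ++ [c])) ++ [EGV.el b] := by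
      simp
    rw [hsplit] at h
    change List.IsChain _ _ at h
    rw [List.isChain_append] at h
    obtain ⟨h1, _, h3⟩ := h
    have hadj : egAdj M₁ M₂ S c (EGV.el b) := by
      refine h3 c ?_ (EGV.el b) (by simp)
      rw [show EGV.src :: (l ++ [c]) = (EGV.src :: l) ++ [c] by simp, List.getLast?_concat]
      rfl
    match c with
    | EGV.src =>
      exfalso
      -- chain ends with arc into src
      rcases List.eq_nil_or_concat l with rfl | ⟨l', d, rfl⟩
      · simp only [List.nil_append, List.isChain_cons_cons] at h1
        exact adj_to_src M₁ M₂ S _ h1.1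
      · simp only [List.concat_eq_append] at h1
        rw [show EGV.src :: ((l' ++ [d]) ++ [EGV.src])
            = (EGV.src :: (l' ++ [d])) ++ [EGV.src] by simp, List.isChain_append] at h1
        refine adj_to_src M₁ M₂ S d (h1.2.2 d ?_ EGV.src (by simp))
        rw [show EGV.src :: (l' ++ [d]) = (EGV.src :: l') ++ [d] by simp, List.getLast?_concat]
        rfl
    | EGV.snk => exact absurd hadj (adj_from_snk M₁ M₂ S _)
    | EGV.el c' =>
      have ihc := ih c' h1
      simp only [List.length_append, List.length_singleton, Nat.even_add_one]
      rcases hadj with ⟨hc'S, hbS, _⟩ | ⟨hc'S, hbS, _⟩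
      · have hne : ¬ Even l.length := fun he => (ihc.2 he) hc'S
        exact ⟨fun _ => hne, fun _ => hbS⟩
      · have hev : Even l.length := ihc.1 hc'S
        exact ⟨fun hb => absurd hbS hb, fun hne => absurd hev hne⟩
end Graph

namespace FinMatroid
variable (M : FinMatroid α)

lemma grow (S : Finset α) (hS : M.Indep S) :
    ∀ n (J : Finset α), M.Indep J → J.card + n = S.card →
    ∃ T, J ⊆ T ∧ T ⊆ J ∪ S ∧ M.Indep T ∧ T.card = S.card := by
  intro n
  induction n with
  | zero => intro J hJ hc; exact ⟨J, le_refl _, Finset.subset_union_left, hJ, by omega⟩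
  | succ n ih =>
    intro J hJ hc
    obtain ⟨e, he, hei⟩ := M.exchange' hJ hS (by omega)
    simp only [Finset.mem_sdiff] at he
    obtain ⟨T, h1, h2, h3, h4⟩ := ih (insert e J) hei
      (by rw [Finset.card_insert_of_notMem he.2]; omega)
    refine ⟨T, (Finset.subset_insert _ _).trans h1, h2.trans ?_, h3, h4⟩
    intro x hx
    rcases Finset.mem_union.1 hx with h | h
    · rcases Finset.mem_insert.1 h with rfl | h'
      · exact Finset.mem_union_right _ he.1
      · exact Finset.mem_union_left _ h'
    · exact Finset.mem_union_right _ h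

end FinMatroid

section Star

/-- Common part of the two star lemmas: from independence of `insert b (S \ Ast)` with
`Ast` nonempty, produce `x ∈ Ast` with `Indep (insert b (S.erase x))`. -/
lemma star_core (M : FinMatroid α) (S : Finset α) {b : α} {Ast : Finset α} (hS : M.Indep S)
    (hbS : b ∉ S) (hAS : Ast ⊆ S) (hne : Ast.Nonempty)
    (hind : M.Indep (insert b (S \ Ast))) :
    ∃ x ∈ Ast, M.Indep (insert b (S.erase x)) := by
  have hJS : (insert b (S \ Ast)) ⊆ insert b S :=
    Finset.insert_subset_insert _ (Finset.sdiff_subset)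
  have hcard : (insert b (S \ Ast)).card + Ast.card - 1 = S.card := by
    rw [Finset.card_insert_of_notMem (fun hc => hbS (Finset.sdiff_subset hc)),
      Finset.card_sdiff_of_subset hAS]
    have := Finset.card_le_card hAS
    have := Finset.card_pos.2 hne
    omega
  obtain ⟨T, hT1, hT2, hT3, hT4⟩ := M.grow S hS (Ast.card - 1) _ hind (by
    have := Finset.card_pos.2 hne
    omega)
  have hTbS : T ⊆ insert b S := hT2.trans (Finset.union_subset hJS (Finset.subset_insert _ _))
  have hbT : b ∈ T := hT1 (Finset.mem_insert_self _ _)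
  -- S \ T has exactly one element
  have hTS : (T ∩ S).card = S.card - 1 := by
    have : T ∩ S = T.erase b := by
      ext t
      simp only [Finset.mem_inter, Finset.mem_erase]
      constructor
      · rintro ⟨ht, htS⟩; exact ⟨fun he => hbS (he ▸ htS), ht⟩
      · rintro ⟨htb, ht⟩
        rcases Finset.mem_insert.1 (hTbS ht) with rfl | h
        · exact absurd rfl htb
        · exact ⟨ht, h⟩
    rw [this, Finset.card_erase_of_mem hbT, hT4]
  have hSd : (S \ T).card = 1 := by
    have h1 := Finset.card_sdiff_add_card_inter S T
    rw [Finset.inter_comm] at h1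
    have hpos : 1 ≤ S.card := le_trans (Finset.card_pos.2 hne) (Finset.card_le_card hAS)
    omega
  obtain ⟨x, hx⟩ := Finset.card_eq_one.1 hSd
  have hxS : x ∈ S ∧ x ∉ T := by
    have hxm : x ∈ S \ T := hx ▸ Finset.mem_singleton_self x
    exact Finset.mem_sdiff.1 hxm
  have hxA : x ∈ Ast := by
    by_contra hxA
    have hmem : x ∈ S \ Ast := Finset.mem_sdiff.2 ⟨hxS.1, hxA⟩
    exact hxS.2 (hT1 (Finset.mem_insert_of_mem hmem))
  refine ⟨x, hxA, ?_⟩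
  have hsub : T ⊆ insert b (S.erase x) := by
    intro t ht
    rcases Finset.mem_insert.1 (hTbS ht) with rfl | htS
    · exact Finset.mem_insert_self _ _
    · refine Finset.mem_insert_of_mem (Finset.mem_erase.2 ⟨?_, htS⟩)
      rintro rfl; exact hxS.2 ht
  have hcard2 : (insert b (S.erase x)).card ≤ T.card := by
    rw [Finset.card_insert_of_notMem (fun hc => hbS (Finset.erase_subset _ _ hc)),
      Finset.card_erase_of_mem hxS.1, hT4]
    have hpos : 1 ≤ S.card := le_trans (Finset.card_pos.2 hne) (Finset.card_le_card hAS)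
    omega
  have heq : T = insert b (S.erase x) := Finset.eq_of_subset_of_card_le hsub hcard2
  exact heq ▸ hT3

variable (M₁ M₂ : FinMatroid α) (S : Finset α)

lemma star1 {b : α} {d : ℕ} {Ast : Finset α} (hS : M₁.Indep S)
    (hb : egDist M₁ M₂ S EGV.src (EGV.el b) = (d : ℕ∞)) (hbS : b ∉ S) (hd : 1 < d)
    (hAS : Ast ⊆ S)
    (hx : ∀ x ∈ Ast, ∃ m : ℕ, egDist M₁ M₂ S EGV.src (EGV.el x) = (m : ℕ∞) ∧ m + 1 < d) :
    ¬ M₁.Indep (insert b (S \ Ast)) := by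
  intro hind
  by_cases hbig : M₁.Indep (insert b S)
  · have hadj : egAdj M₁ M₂ S EGV.src (EGV.el b) := ⟨hbS, hbig⟩
    have hle := egDist_le M₁ M₂ S (l := []) (v := EGV.el b) (u := EGV.src)
      (by simp only [List.nil_append]; exact List.isChain_pair.2 hadj)
    rw [hb] at hle
    simp only [List.length_nil, Nat.cast_zero, zero_add] at hle
    have : d ≤ 1 := by exact_mod_cast hle
    omega
  · have hne : Ast.Nonempty := by
      rcases Finset.eq_empty_or_nonempty Ast with rfl | h
      · rw [Finset.sdiff_empty] at hind; exact absurd hind hbig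
      · exact h
    obtain ⟨x, hxA, hxe⟩ := star_core M₁ S hS hbS hAS hne hind
    have hadj : egAdj M₁ M₂ S (EGV.el x) (EGV.el b) := Or.inl ⟨hAS hxA, hbS, hxe⟩
    obtain ⟨m, hm, hmd⟩ := hx x hxA
    have hle := egDist_le_succ M₁ M₂ S hm hadj
    rw [hb] at hle
    have : d ≤ m + 1 := by exact_mod_cast hle
    omega

lemma star2 {b : α} {d ds : ℕ} {Ast : Finset α} (hS : M₂.Indep S)
    (hb : egDist M₁ M₂ S EGV.src (EGV.el b) = (d : ℕ∞)) (hbS : b ∉ S)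
    (hsnk : egDist M₁ M₂ S EGV.src EGV.snk = (ds : ℕ∞)) (hds : d + 1 < ds)
    (hAS : Ast ⊆ S)
    (hx : ∀ x ∈ Ast, ∃ m : ℕ, egDist M₁ M₂ S EGV.src (EGV.el x) = (m : ℕ∞) ∧ d + 1 < m) :
    ¬ M₂.Indep (insert b (S \ Ast)) := by
  intro hind
  by_cases hbig : M₂.Indep (insert b S)
  · have hadj : egAdj M₁ M₂ S (EGV.el b) EGV.snk := ⟨hbS, hbig⟩
    have hle := egDist_le_succ M₁ M₂ S hb hadj
    rw [hsnk] at hle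
    have : ds ≤ d + 1 := by exact_mod_cast hle
    omega
  · have hne : Ast.Nonempty := by
      rcases Finset.eq_empty_or_nonempty Ast with rfl | h
      · rw [Finset.sdiff_empty] at hind; exact absurd hind hbig
      · exact h
    obtain ⟨x, hxA, hxe⟩ := star_core M₂ S hS hbS hAS hne hind
    have hadj : egAdj M₁ M₂ S (EGV.el b) (EGV.el x) := Or.inr ⟨hbS, hAS hxA, hxe⟩
    obtain ⟨m, hm, hmd⟩ := hx x hxA
    have hle := egDist_le_succ M₁ M₂ S hb hadj
    rw [hm] at hle
    have : m ≤ d + 1 := by exact_mod_cast hle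
    omega

end Star


/-- An augmenting set `(B 1, A 1, B 2, …, A ℓ, B (ℓ+1))` of width `w` in the exchange graph
`G(S)`: pairwise disjoint sets with `A k ⊆ D_{2k}`, `B k ⊆ D_{2k-1}` (distance layers from the
source), all of cardinality `w`, with `S + B₁ ∈ I₁`, `S + B_{ℓ+1} ∈ I₂`,
`S − A_k + B_{k+1} ∈ I₁` and `S − A_k + B_k ∈ I₂`. -/
def IsAugSet (M₁ M₂ : FinMatroid α) (S : Finset α) (ℓ w : ℕ)
    (A B : ℕ → Finset α) : Prop :=
  (∀ k ∈ Finset.Icc 1 ℓ, ∀ a ∈ A k,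
      egDist M₁ M₂ S EGV.src (EGV.el a) = ((2 * k : ℕ) : ℕ∞)) ∧
  (∀ k ∈ Finset.Icc 1 (ℓ + 1), ∀ b ∈ B k,
      egDist M₁ M₂ S EGV.src (EGV.el b) = ((2 * k - 1 : ℕ) : ℕ∞)) ∧
  (∀ i ∈ Finset.Icc 1 ℓ, ∀ j ∈ Finset.Icc 1 ℓ, i ≠ j → Disjoint (A i) (A j)) ∧
  (∀ i ∈ Finset.Icc 1 (ℓ + 1), ∀ j ∈ Finset.Icc 1 (ℓ + 1), i ≠ j → Disjoint (B i) (B j)) ∧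
  (∀ i ∈ Finset.Icc 1 ℓ, ∀ j ∈ Finset.Icc 1 (ℓ + 1), Disjoint (A i) (B j)) ∧
  (∀ k ∈ Finset.Icc 1 ℓ, (A k).card = w) ∧
  (∀ k ∈ Finset.Icc 1 (ℓ + 1), (B k).card = w) ∧
  M₁.Indep (S ∪ B 1) ∧
  M₂.Indep (S ∪ B (ℓ + 1)) ∧
  (∀ k ∈ Finset.Icc 1 ℓ, M₁.Indep ((S \ A k) ∪ B (k + 1))) ∧
  (∀ k ∈ Finset.Icc 1 ℓ, M₂.Indep ((S \ A k) ∪ B k))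

/-- Augmenting along an augmenting set: if `Π = (B₁, A₁, …, A_ℓ, B_{ℓ+1})` is an augmenting set
of width `w` in `G(S)` (whose shortest `s`–`t` distance is `2(ℓ+1)`), then
`S ⊕ Π = S − (A₁ ∪ ⋯ ∪ A_ℓ) + (B₁ ∪ ⋯ ∪ B_{ℓ+1})` is a common independent set of size
`|S| + w`. -/
lemma assemble (M : FinMatroid α) {S Z WW Bx : Finset α}
    (hS : M.Indep S) (hZ : M.Indep Z) (hZsub : Z ⊆ S ∪ WW) (hZcard : Z.card = S.card)
    (hnoext : ∀ b ∈ WW, ¬ M.Indep (insert b S))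
    (hSB : M.Indep (S ∪ Bx)) (hBS : Disjoint Bx S) (hBZ : Disjoint Bx Z) :
    M.Indep (Z ∪ Bx) := by
  have hrS : M.rank S = S.card :=
    le_antisymm (M.rank_le_card S) (M.le_rank hS (le_refl _))
  have hrSb : ∀ b ∈ WW, M.rank (insert b S) = M.rank S := by
    intro b hb
    rw [hrS]
    refine M.rank_eq_of_maximal (Finset.subset_insert _ _) hS fun e he heS => ?_
    rcases Finset.mem_insert.1 he with rfl | h
    · exact hnoext e hb
    · exact absurd h heS
  have hrSW : M.rank (S ∪ WW) = S.card := by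
    rw [M.rank_union_of_forall (le_refl S) hrSb, hrS]
  have hrX : M.rank Z = S.card := by
    refine le_antisymm (le_trans (M.rank_mono hZsub) (le_of_eq hrSW)) ?_
    rw [← hZcard]; exact M.le_rank hZ (le_refl _)
  have hspanSX : ∀ a ∈ S, M.rank (insert a Z) = M.rank Z := by
    intro a ha
    refine le_antisymm ?_ (M.rank_mono (Finset.subset_insert _ _))
    rw [hrX, ← hrSW]
    exact M.rank_mono (Finset.insert_subset (Finset.mem_union_left _ ha) hZsub)
  have key : M.rank ((Z ∪ Bx) ∪ S) = M.rank (Z ∪ Bx) :=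
    M.rank_union_of_forall (Y := Z) Finset.subset_union_left hspanSX
  have hge : S.card + Bx.card ≤ M.rank ((Z ∪ Bx) ∪ S) := by
    have hsub : S ∪ Bx ⊆ (Z ∪ Bx) ∪ S := by
      intro x hx
      rcases Finset.mem_union.1 hx with h | h
      · exact Finset.mem_union_right _ h
      · exact Finset.mem_union_left _ (Finset.mem_union_right _ h)
    have := M.le_rank hSB hsub
    rwa [Finset.card_union_of_disjoint hBS.symm] at this
  have hcZB : (Z ∪ Bx).card = S.card + Bx.card := by
    rw [Finset.card_union_of_disjoint hBZ.symm, hZcard]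
  apply M.indep_of_rank_eq_card
  have := M.rank_le_card (Z ∪ Bx)
  omega

theorem augset_augments (M₁ M₂ : FinMatroid α) (S : Finset α) (ℓ w : ℕ)
    (A B : ℕ → Finset α)
    (hS₁ : M₁.Indep S) (hS₂ : M₂.Indep S)
    (hdist : egDist M₁ M₂ S EGV.src EGV.snk = ((2 * (ℓ + 1) : ℕ) : ℕ∞))
    (hAug : IsAugSet M₁ M₂ S ℓ w A B) :
    M₁.Indep ((S \ (Finset.Icc 1 ℓ).biUnion A) ∪ (Finset.Icc 1 (ℓ + 1)).biUnion B) ∧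
    M₂.Indep ((S \ (Finset.Icc 1 ℓ).biUnion A) ∪ (Finset.Icc 1 (ℓ + 1)).biUnion B) ∧
    ((S \ (Finset.Icc 1 ℓ).biUnion A) ∪ (Finset.Icc 1 (ℓ + 1)).biUnion B).card
      = S.card + w := by
  obtain ⟨hdA, hdB, hAA, hBB, hAB, hcA, hcB, hB1, hBl, hI1, hI2⟩ := hAug
  -- membership basics
  have hA_S : ∀ k, 1 ≤ k → k ≤ ℓ → A k ⊆ S := by
    intro k h1 h2 a ha
    have hd := hdA k (Finset.mem_Icc.2 ⟨h1, h2⟩) a ha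
    obtain ⟨l, hc, hlen⟩ := exists_path M₁ M₂ S hd
    have hpar := chain_parity M₁ M₂ S l a hc
    by_contra haS
    have hev := hpar.1 haS
    rw [Nat.even_iff] at hev
    omega
  have hB_S : ∀ k, 1 ≤ k → k ≤ ℓ + 1 → ∀ b ∈ B k, b ∉ S := by
    intro k h1 h2 b hb
    have hd := hdB k (Finset.mem_Icc.2 ⟨h1, h2⟩) b hb
    obtain ⟨l, hc, hlen⟩ := exists_path M₁ M₂ S hd
    have hpar := chain_parity M₁ M₂ S l b hc
    refine hpar.2 ?_
    rw [Nat.even_iff]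
    omega
  -- first induction (M₁, upward)
  have ind1 : ∀ k, k ≤ ℓ →
      M₁.Indep ((S \ (Finset.Icc 1 k).biUnion A) ∪ (Finset.Icc 2 (k + 1)).biUnion B) := by
    intro k
    induction k with
    | zero =>
      intro _
      simpa using hS₁
    | succ k ih =>
      intro hk
      have ihk := ih (by omega)
      -- sets
      set C := S \ (Finset.Icc 1 (k + 1)).biUnion A with hC
      set A' := A (k + 1) with hA'
      set R := (Finset.Icc 2 (k + 1)).biUnion B with hR
      set B' := B (k + 2) with hB'
      have hA'S : A' ⊆ S := hA_S (k + 1) (by omega) (by omega)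
      have hCA' : C ∪ A' = S \ (Finset.Icc 1 k).biUnion A := by
        ext x
        simp only [hC, hA', Finset.mem_union, Finset.mem_sdiff, Finset.mem_biUnion,
          Finset.mem_Icc, not_exists, not_and]
        constructor
        · rintro (⟨hxS, hno⟩ | hxA)
          · exact ⟨hxS, fun j hj => hno j ⟨hj.1, by omega⟩⟩
          · refine ⟨hA'S hxA, fun j hj hxj => ?_⟩
            have hdisj := hAA j (Finset.mem_Icc.2 ⟨hj.1, by omega⟩)
              (k + 1) (Finset.mem_Icc.2 ⟨by omega, by omega⟩) (by omega)
            exact Finset.disjoint_left.1 hdisj hxj hxA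
        · rintro ⟨hxS, hno⟩
          by_cases hxA : x ∈ A (k + 1)
          · exact Or.inr hxA
          · refine Or.inl ⟨hxS, fun j hj hxj => ?_⟩
            rcases Nat.lt_or_ge j (k + 1) with h | h
            · exact hno j ⟨hj.1, by omega⟩ hxj
            · have : j = k + 1 := by omega
              exact hxA (this ▸ hxj)
      have hRB' : R ∪ B' = (Finset.Icc 2 (k + 2)).biUnion B := by
        rw [show Finset.Icc 2 (k + 2) = insert (k + 2) (Finset.Icc 2 (k + 1)) from
          (Finset.insert_Icc_right_eq_Icc_add_one (by omega)).symm,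
          Finset.biUnion_insert, Finset.union_comm]
      -- disjointness
      have hBnotS : ∀ j, 1 ≤ j → j ≤ ℓ + 1 → Disjoint (B j) (S \ (Finset.Icc 1 (k+1)).biUnion A) := by
        intro j h1 h2
        rw [Finset.disjoint_left]
        intro b hb hbC
        exact hB_S j h1 h2 b hb (Finset.mem_sdiff.1 hbC).1
      have hAC : Disjoint A' C := by
        rw [Finset.disjoint_left]
        intro a ha haC
        have := (Finset.mem_sdiff.1 haC).2
        exact this (Finset.mem_biUnion.2 ⟨k + 1, Finset.mem_Icc.2 ⟨by omega, by omega⟩, ha⟩)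
      have hBC : Disjoint B' C := hBnotS (k + 2) (by omega) (by omega)
      have hBR : Disjoint B' R := by
        rw [Finset.disjoint_left]
        intro b hb hbR
        obtain ⟨j, hj, hbj⟩ := Finset.mem_biUnion.1 hbR
        rw [Finset.mem_Icc] at hj
        have := hBB (k + 2) (Finset.mem_Icc.2 ⟨by omega, by omega⟩)
          j (Finset.mem_Icc.2 ⟨by omega, by omega⟩) (by omega)
        exact Finset.disjoint_left.1 this hb hbj
      have hCR : Disjoint C R := by
        rw [Finset.disjoint_right]
        intro b hbR hbC
        obtain ⟨j, hj, hbj⟩ := Finset.mem_biUnion.1 hbR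
        rw [Finset.mem_Icc] at hj
        exact hB_S j (by omega) (by omega) b hbj (Finset.mem_sdiff.1 hbC).1
      have hAR : Disjoint A' R := by
        rw [Finset.disjoint_left]
        intro a ha haR
        obtain ⟨j, hj, hbj⟩ := Finset.mem_biUnion.1 haR
        rw [Finset.mem_Icc] at hj
        have := hAB (k + 1) (Finset.mem_Icc.2 ⟨by omega, by omega⟩)
          j (Finset.mem_Icc.2 ⟨by omega, by omega⟩)
        exact Finset.disjoint_left.1 this ha hbj
      have hcard : A'.card = B'.card := by
        rw [hcA (k + 1) (Finset.mem_Icc.2 ⟨by omega, by omega⟩),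
          hcB (k + 2) (Finset.mem_Icc.2 ⟨by omega, by omega⟩)]
      have h1 : M₁.Indep (C ∪ A' ∪ R) := by rw [hCA']; exact ihk
      have h2 : M₁.Indep (C ∪ B') := by
        refine M₁.subset_indep (hI1 (k + 1) (Finset.mem_Icc.2 ⟨by omega, by omega⟩)) ?_
        apply Finset.union_subset_union _ (le_refl _)
        intro x hx
        rw [Finset.mem_sdiff] at hx ⊢
        refine ⟨hx.1, fun hxA => hx.2 ?_⟩
        exact Finset.mem_biUnion.2 ⟨k + 1, Finset.mem_Icc.2 ⟨by omega, by omega⟩, hxA⟩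
      have h3 : ∀ b ∈ B', ¬ M₁.Indep (insert b (C ∪ A')) := by
        intro b hb
        rw [hCA']
        refine star1 M₁ M₂ S hS₁
          (hdB (k + 2) (Finset.mem_Icc.2 ⟨by omega, by omega⟩) b hb)
          (hB_S (k + 2) (by omega) (by omega) b hb) (by omega)
          (by
            intro x hx
            obtain ⟨j, hj, hxj⟩ := Finset.mem_biUnion.1 hx
            rw [Finset.mem_Icc] at hj
            exact hA_S j hj.1 (by omega) hxj)
          ?_
        intro x hx
        obtain ⟨j, hj, hxj⟩ := Finset.mem_biUnion.1 hx
        rw [Finset.mem_Icc] at hj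
        exact ⟨2 * j, hdA j (Finset.mem_Icc.2 ⟨hj.1, by omega⟩) x hxj, by omega⟩
      have := M₁.swap_lemma hAC hBC hBR hCR hAR hcard h1 h2 h3
      rw [Finset.union_assoc, hRB'] at this
      exact this
  -- second induction (M₂, downward)
  have ind2 : ∀ i, i ≤ ℓ →
      M₂.Indep ((S \ (Finset.Icc (ℓ + 1 - i) ℓ).biUnion A) ∪
        (Finset.Icc (ℓ + 1 - i) ℓ).biUnion B) := by
    intro i
    induction i with
    | zero =>
      intro _
      rw [show Finset.Icc (ℓ + 1 - 0) ℓ = ∅ from Finset.Icc_eq_empty (by omega)]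
      simpa using hS₂
    | succ i ih =>
      intro hi
      have ihk := ih (by omega)
      have he1 : ℓ + 1 - (i + 1) = ℓ - i := by omega
      have he2 : ℓ + 1 - i = (ℓ - i) + 1 := by omega
      rw [he2] at ihk
      rw [he1]
      set k := ℓ - i with hkdef
      have hk1 : 1 ≤ k := by omega
      have hk2 : k ≤ ℓ := by omega
      set C := S \ (Finset.Icc k ℓ).biUnion A with hC
      set A' := A k with hA'
      set R := (Finset.Icc (k + 1) ℓ).biUnion B with hR
      set B' := B k with hB'
      have hA'S : A' ⊆ S := hA_S k hk1 hk2
      have hIcc : Finset.Icc k ℓ = insert k (Finset.Icc (k + 1) ℓ) :=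
        (Finset.insert_Icc_add_one_left_eq_Icc (by omega)).symm
      have hCA' : C ∪ A' = S \ (Finset.Icc (k + 1) ℓ).biUnion A := by
        ext x
        simp only [hC, hA', Finset.mem_union, Finset.mem_sdiff, Finset.mem_biUnion,
          Finset.mem_Icc, not_exists, not_and]
        constructor
        · rintro (⟨hxS, hno⟩ | hxA)
          · exact ⟨hxS, fun j hj => hno j ⟨by omega, hj.2⟩⟩
          · refine ⟨hA'S hxA, fun j hj hxj => ?_⟩
            have hdisj := hAA j (Finset.mem_Icc.2 ⟨by omega, hj.2⟩)
              k (Finset.mem_Icc.2 ⟨hk1, hk2⟩) (by omega)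
            exact Finset.disjoint_left.1 hdisj hxj hxA
        · rintro ⟨hxS, hno⟩
          by_cases hxA : x ∈ A k
          · exact Or.inr hxA
          · refine Or.inl ⟨hxS, fun j hj hxj => ?_⟩
            rcases Nat.lt_or_ge k j with h | h
            · exact hno j ⟨by omega, hj.2⟩ hxj
            · have : j = k := by omega
              exact hxA (this ▸ hxj)
      have hRB' : R ∪ B' = (Finset.Icc k ℓ).biUnion B := by
        rw [hIcc, Finset.biUnion_insert, Finset.union_comm]
      have hAC : Disjoint A' C := by
        rw [Finset.disjoint_left]
        intro a ha haC
        have := (Finset.mem_sdiff.1 haC).2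
        exact this (Finset.mem_biUnion.2 ⟨k, Finset.mem_Icc.2 ⟨le_refl _, hk2⟩, ha⟩)
      have hBC : Disjoint B' C := by
        rw [Finset.disjoint_left]
        intro b hb hbC
        exact hB_S k hk1 (by omega) b hb (Finset.mem_sdiff.1 hbC).1
      have hBR : Disjoint B' R := by
        rw [Finset.disjoint_left]
        intro b hb hbR
        obtain ⟨j, hj, hbj⟩ := Finset.mem_biUnion.1 hbR
        rw [Finset.mem_Icc] at hj
        have := hBB k (Finset.mem_Icc.2 ⟨hk1, by omega⟩)
          j (Finset.mem_Icc.2 ⟨by omega, by omega⟩) (by omega)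
        exact Finset.disjoint_left.1 this hb hbj
      have hCR : Disjoint C R := by
        rw [Finset.disjoint_right]
        intro b hbR hbC
        obtain ⟨j, hj, hbj⟩ := Finset.mem_biUnion.1 hbR
        rw [Finset.mem_Icc] at hj
        exact hB_S j (by omega) (by omega) b hbj (Finset.mem_sdiff.1 hbC).1
      have hAR : Disjoint A' R := by
        rw [Finset.disjoint_left]
        intro a ha haR
        obtain ⟨j, hj, hbj⟩ := Finset.mem_biUnion.1 haR
        rw [Finset.mem_Icc] at hj
        have := hAB k (Finset.mem_Icc.2 ⟨hk1, hk2⟩)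
          j (Finset.mem_Icc.2 ⟨by omega, by omega⟩)
        exact Finset.disjoint_left.1 this ha hbj
      have hcard : A'.card = B'.card := by
        rw [hcA k (Finset.mem_Icc.2 ⟨hk1, hk2⟩), hcB k (Finset.mem_Icc.2 ⟨hk1, by omega⟩)]
      have h1 : M₂.Indep (C ∪ A' ∪ R) := by rw [hCA']; exact ihk
      have h2 : M₂.Indep (C ∪ B') := by
        refine M₂.subset_indep (hI2 k (Finset.mem_Icc.2 ⟨hk1, hk2⟩)) ?_
        apply Finset.union_subset_union _ (le_refl _)
        intro x hx
        rw [Finset.mem_sdiff] at hx ⊢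
        refine ⟨hx.1, fun hxA => hx.2 ?_⟩
        exact Finset.mem_biUnion.2 ⟨k, Finset.mem_Icc.2 ⟨le_refl _, hk2⟩, hxA⟩
      have h3 : ∀ b ∈ B', ¬ M₂.Indep (insert b (C ∪ A')) := by
        intro b hb
        rw [hCA']
        refine star2 M₁ M₂ S hS₂
          (hdB k (Finset.mem_Icc.2 ⟨hk1, by omega⟩) b hb)
          (hB_S k hk1 (by omega) b hb) hdist (by omega)
          (by
            intro x hx
            obtain ⟨j, hj, hxj⟩ := Finset.mem_biUnion.1 hx
            rw [Finset.mem_Icc] at hj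
            exact hA_S j (by omega) hj.2 hxj)
          ?_
        intro x hx
        obtain ⟨j, hj, hxj⟩ := Finset.mem_biUnion.1 hx
        rw [Finset.mem_Icc] at hj
        exact ⟨2 * j, hdA j (Finset.mem_Icc.2 ⟨by omega, hj.2⟩) x hxj, by omega⟩
      have := M₂.swap_lemma hAC hBC hBR hCR hAR hcard h1 h2 h3
      rw [Finset.union_assoc, hRB'] at this
      exact this
  -- assembly
  set AU := (Finset.Icc 1 ℓ).biUnion A with hAU
  set W2 := (Finset.Icc 2 (ℓ + 1)).biUnion B with hW2
  set W1 := (Finset.Icc 1 ℓ).biUnion B with hW1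
  have hXind : M₁.Indep ((S \ AU) ∪ W2) := ind1 ℓ (le_refl _)
  have hYind : M₂.Indep ((S \ AU) ∪ W1) := by
    have h := ind2 ℓ (le_refl _)
    rw [show ℓ + 1 - ℓ = 1 by omega] at h
    exact h
  have hAUS : AU ⊆ S := by
    intro x hx
    obtain ⟨j, hj, hxj⟩ := Finset.mem_biUnion.1 hx
    rw [Finset.mem_Icc] at hj
    exact hA_S j hj.1 hj.2 hxj
  have hcAU : AU.card = ℓ * w := by
    rw [hAU, Finset.card_biUnion (fun i hi j hj hij => hAA i hi j hj hij),
      Finset.sum_congr rfl hcA, Finset.sum_const, Nat.card_Icc, smul_eq_mul]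
    have h1 : ℓ + 1 - 1 = ℓ := by omega
    have h2 : ℓ + 1 + 1 - 2 = ℓ := by omega
    simp [h1, h2]
  have hcW2 : W2.card = ℓ * w := by
    rw [hW2, Finset.card_biUnion (fun i hi j hj hij => hBB i
        (by simp only [Finset.mem_coe, Finset.mem_Icc] at hi hj ⊢; omega) j (by simp only [Finset.mem_coe, Finset.mem_Icc] at hi hj ⊢; omega) hij),
      Finset.sum_congr rfl (fun k hk => hcB k (by rw [Finset.mem_Icc] at *; omega)),
      Finset.sum_const, Nat.card_Icc, smul_eq_mul]
    have h1 : ℓ + 1 - 1 = ℓ := by omega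
    have h2 : ℓ + 1 + 1 - 2 = ℓ := by omega
    simp [h1, h2]
  have hcW1 : W1.card = ℓ * w := by
    rw [hW1, Finset.card_biUnion (fun i hi j hj hij => hBB i
        (by simp only [Finset.mem_coe, Finset.mem_Icc] at hi hj ⊢; omega) j (by simp only [Finset.mem_coe, Finset.mem_Icc] at hi hj ⊢; omega) hij),
      Finset.sum_congr rfl (fun k hk => hcB k (by rw [Finset.mem_Icc] at *; omega)),
      Finset.sum_const, Nat.card_Icc, smul_eq_mul]
    have h1 : ℓ + 1 - 1 = ℓ := by omega
    have h2 : ℓ + 1 + 1 - 2 = ℓ := by omega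
    simp [h1, h2]
  have hWS2 : ∀ b ∈ W2, b ∉ S := by
    intro b hb
    obtain ⟨j, hj, hbj⟩ := Finset.mem_biUnion.1 hb
    rw [Finset.mem_Icc] at hj
    exact hB_S j (by omega) (by omega) b hbj
  have hWS1 : ∀ b ∈ W1, b ∉ S := by
    intro b hb
    obtain ⟨j, hj, hbj⟩ := Finset.mem_biUnion.1 hb
    rw [Finset.mem_Icc] at hj
    exact hB_S j (by omega) (by omega) b hbj
  have hdisjX : Disjoint (S \ AU) W2 := by
    rw [Finset.disjoint_right]
    intro b hb hbS
    exact hWS2 b hb (Finset.mem_sdiff.1 hbS).1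
  have hdisjY : Disjoint (S \ AU) W1 := by
    rw [Finset.disjoint_right]
    intro b hb hbS
    exact hWS1 b hb (Finset.mem_sdiff.1 hbS).1
  have hAUcard_le : ℓ * w ≤ S.card := by
    have := Finset.card_le_card hAUS
    omega
  have hXcard : ((S \ AU) ∪ W2).card = S.card := by
    rw [Finset.card_union_of_disjoint hdisjX, Finset.card_sdiff_of_subset hAUS, hcW2]
    omega
  have hYcard : ((S \ AU) ∪ W1).card = S.card := by
    rw [Finset.card_union_of_disjoint hdisjY, Finset.card_sdiff_of_subset hAUS, hcW1]
    omega
  have hnoext1 : ∀ b ∈ W2, ¬ M₁.Indep (insert b S) := by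
    intro b hb
    obtain ⟨j, hj, hbj⟩ := Finset.mem_biUnion.1 hb
    rw [Finset.mem_Icc] at hj
    have h := star1 M₁ M₂ S hS₁ (hdB j (Finset.mem_Icc.2 ⟨by omega, by omega⟩) b hbj)
      (hB_S j (by omega) (by omega) b hbj) (by omega) (Finset.empty_subset S) (by simp)
    rwa [Finset.sdiff_empty] at h
  have hnoext2 : ∀ b ∈ W1, ¬ M₂.Indep (insert b S) := by
    intro b hb
    obtain ⟨j, hj, hbj⟩ := Finset.mem_biUnion.1 hb
    rw [Finset.mem_Icc] at hj
    have h := star2 M₁ M₂ S hS₂ (hdB j (Finset.mem_Icc.2 ⟨by omega, by omega⟩) b hbj)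
      (hB_S j (by omega) (by omega) b hbj) hdist (by omega) (Finset.empty_subset S) (by simp)
    rwa [Finset.sdiff_empty] at h
  have hB1S : Disjoint (B 1) S := by
    rw [Finset.disjoint_left]
    intro b hb hbS
    exact hB_S 1 (le_refl _) (by omega) b hb hbS
  have hBlS : Disjoint (B (ℓ + 1)) S := by
    rw [Finset.disjoint_left]
    intro b hb hbS
    exact hB_S (ℓ + 1) (by omega) (le_refl _) b hb hbS
  have hB1X : Disjoint (B 1) ((S \ AU) ∪ W2) := by
    rw [Finset.disjoint_union_right]
    constructor
    · exact hB1S.mono_right Finset.sdiff_subset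
    · rw [Finset.disjoint_left]
      intro b hb hbW
      obtain ⟨j, hj, hbj⟩ := Finset.mem_biUnion.1 hbW
      rw [Finset.mem_Icc] at hj
      have := hBB 1 (Finset.mem_Icc.2 ⟨le_refl _, by omega⟩)
        j (Finset.mem_Icc.2 ⟨by omega, by omega⟩) (by omega)
      exact Finset.disjoint_left.1 this hb hbj
  have hBlY : Disjoint (B (ℓ + 1)) ((S \ AU) ∪ W1) := by
    rw [Finset.disjoint_union_right]
    constructor
    · exact hBlS.mono_right Finset.sdiff_subset
    · rw [Finset.disjoint_left]
      intro b hb hbW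
      obtain ⟨j, hj, hbj⟩ := Finset.mem_biUnion.1 hbW
      rw [Finset.mem_Icc] at hj
      have := hBB (ℓ + 1) (Finset.mem_Icc.2 ⟨by omega, le_refl _⟩)
        j (Finset.mem_Icc.2 ⟨by omega, by omega⟩) (by omega)
      exact Finset.disjoint_left.1 this hb hbj
  have hXsub : (S \ AU) ∪ W2 ⊆ S ∪ W2 :=
    Finset.union_subset_union Finset.sdiff_subset (le_refl _)
  have hYsub : (S \ AU) ∪ W1 ⊆ S ∪ W1 :=
    Finset.union_subset_union Finset.sdiff_subset (le_refl _)
  have hfin1 := assemble M₁ hS₁ hXind hXsub hXcard hnoext1 hB1 hB1S hB1X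
  have hfin2 := assemble M₂ hS₂ hYind hYsub hYcard hnoext2 hBl hBlS hBlY
  have htarg1 : (S \ AU) ∪ (Finset.Icc 1 (ℓ + 1)).biUnion B = ((S \ AU) ∪ W2) ∪ B 1 := by
    rw [show Finset.Icc 1 (ℓ + 1) = insert 1 (Finset.Icc 2 (ℓ + 1)) from
      (Finset.insert_Icc_add_one_left_eq_Icc (by omega)).symm, Finset.biUnion_insert,
      Finset.union_comm (B 1) ((Finset.Icc 2 (ℓ + 1)).biUnion B), ← Finset.union_assoc]
  have htarg2 : (S \ AU) ∪ (Finset.Icc 1 (ℓ + 1)).biUnion B = ((S \ AU) ∪ W1) ∪ B (ℓ + 1) := by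
    rw [show Finset.Icc 1 (ℓ + 1) = insert (ℓ + 1) (Finset.Icc 1 ℓ) from
      (Finset.insert_Icc_right_eq_Icc_add_one (by omega)).symm, Finset.biUnion_insert,
      Finset.union_comm (B (ℓ + 1)) ((Finset.Icc 1 ℓ).biUnion B), ← Finset.union_assoc]
  refine ⟨by rw [htarg1]; exact hfin1, by rw [htarg2]; exact hfin2, ?_⟩
  rw [htarg1, Finset.card_union_of_disjoint hB1X.symm, hXcard,
    hcB 1 (Finset.mem_Icc.2 ⟨le_refl _, by omega⟩)]
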